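/- Let n ≥ 1, k ≥ 0, l ≥ 0 be integers, m ∈ ℤ, s ∈ ℂ, and let h : ℝⁿ → ℂ be a harmonic polynomial homogeneous of degree k. Then for all θ ∈ ℝ and y ∈ ℝⁿ, (η⁺ F_{m,l,k}[h])(θ,y) = −((m+4l+2k+n)/4) · F_{m+4,l,k}[h](θ,y). -/

import Mathlib

noncomputable section

/-- `n`-dimensional Euclidean space. -/
abbrev E (n : ℕ) := EuclideanSpace ℝ (Fin n)

/-- Partial derivative in the `j`-th coordinate direction. -/
noncomputable def pd {n : ℕ} (j : Fin n) (f : E n → ℂ) (y : E n) : ℂ :=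
  fderiv ℝ f y (EuclideanSpace.single j 1)

/-- The Laplacian `Δ = ∑ⱼ ∂²/∂yⱼ²`. -/
noncomputable def lap {n : ℕ} (f : E n → ℂ) (y : E n) : ℂ :=
  ∑ j : Fin n, pd j (pd j f) y

/-- `h : ℝⁿ → ℂ` is a harmonic polynomial, homogeneous of degree `k`:
it is given by a polynomial in the coordinates, `h (t • y) = t^k * h y`,
and `Δ h = 0`. -/
def IsHarmonicHomog {n : ℕ} (k : ℕ) (h : E n → ℂ) : Prop :=
  (∃ p : MvPolynomial (Fin n) ℂ, ∀ y : E n, h y = MvPolynomial.eval (fun j => ((y j : ℝ) : ℂ)) p) ∧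
  (∀ (t : ℝ) (y : E n), h (t • y) = (t : ℂ) ^ k * h y) ∧
  (∀ y : E n, lap h y = 0)

/-- Confluent hypergeometric function of the first kind
`₁F₁(a,b,z) = ∑ⱼ (a)ⱼ/(b)ⱼ · zʲ/j!`. -/
noncomputable def oneF1 (a b z : ℂ) : ℂ :=
  ∑' j : ℕ, ((ascPochhammer ℂ j).eval a / (ascPochhammer ℂ j).eval b) * z ^ j / (j.factorial : ℂ)

/-- The `K`-finite vector
`F_{m,l,k}[h](θ,y) = e^{-imθ/2} e^{-is‖y‖²} ‖y‖^{2l} h(y) ₁F₁((m+4l+2k+n)/4, 2l+k+n/2, 2is‖y‖²)`. -/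
noncomputable def Fm (n : ℕ) (s : ℂ) (m : ℤ) (l : ℕ) (k : ℤ) (h : E n → ℂ)
    (θ : ℝ) (y : E n) : ℂ :=
  Complex.exp (-Complex.I * (m : ℂ) * (θ : ℂ) / 2) *
    Complex.exp (-Complex.I * s * ((‖y‖ : ℝ) : ℂ) ^ 2) * ((‖y‖ : ℝ) : ℂ) ^ (2 * l) * h y *
    oneF1 (((m : ℂ) + 4 * (l : ℂ) + 2 * (k : ℂ) + (n : ℂ)) / 4)
      (2 * (l : ℂ) + (k : ℂ) + (n : ℂ) / 2)
      (2 * Complex.I * s * ((‖y‖ : ℝ) : ℂ) ^ 2)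

namespace Aux12
open Polynomial Complex Filter

open Polynomial Complex Filter

noncomputable def Pc (j : ℕ) (x : ℂ) : ℂ := (ascPochhammer ℂ j).eval x
noncomputable def Pr (j : ℕ) (x : ℝ) : ℝ := (ascPochhammer ℝ j).eval x
noncomputable def cc (a : ℂ) (b0 : ℝ) (j : ℕ) : ℂ :=
  Pc j a * (((Pr j b0 : ℝ) : ℂ) * (j.factorial : ℂ))⁻¹

lemma Pc_succ (j : ℕ) (x : ℂ) : Pc (j+1) x = Pc j x * (x + j) := ascPochhammer_succ_eval j x
lemma Pr_succ (j : ℕ) (x : ℝ) : Pr (j+1) x = Pr j x * (x + j) := ascPochhammer_succ_eval j x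
lemma Pc_zero (x : ℂ) : Pc 0 x = 1 := by simp [Pc]
lemma Pr_zero (x : ℝ) : Pr 0 x = 1 := by simp [Pr]

lemma Pc_ofReal (j : ℕ) (x : ℝ) : Pc j (x : ℂ) = ((Pr j x : ℝ) : ℂ) := by
  induction j with
  | zero => simp [Pc_zero, Pr_zero]
  | succ j ih => rw [Pc_succ, Pr_succ, ih]; push_cast; ring

lemma Pr_pos {x : ℝ} (hx : 0 < x) (j : ℕ) : 0 < Pr j x := ascPochhammer_pos j x hx

lemma Pc_norm_le (a : ℂ) (j : ℕ) : ‖Pc j a‖ ≤ Pr j (‖a‖+1) := by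
  induction j with
  | zero => simp [Pc_zero, Pr_zero]
  | succ j ih =>
    rw [Pc_succ, Pr_succ]
    have h1 : ‖a + (j:ℂ)‖ ≤ ‖a‖ + 1 + j := by
      calc ‖a + (j:ℂ)‖ ≤ ‖a‖ + ‖(j:ℂ)‖ := norm_add_le _ _
        _ ≤ ‖a‖ + 1 + j := by
            simp only [Complex.norm_natCast]; linarith
    calc ‖Pc j a * (a+(j:ℂ))‖ = ‖Pc j a‖ * ‖a+(j:ℂ)‖ := norm_mul _ _
      _ ≤ Pr j (‖a‖+1) * (‖a‖+1+j) :=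
          mul_le_mul ih h1 (norm_nonneg _) ((Pr_pos (by positivity) j).le)

lemma Pc_shift (j : ℕ) (a : ℂ) : Pc j a * (a + j) = a * Pc j (a+1) := by
  have h2 : Pc (j+1) a = a * Pc j (a+1) := by
    unfold Pc
    rw [ascPochhammer_succ_left]
    simp [Polynomial.eval_mul, Polynomial.eval_comp]
  rw [← Pc_succ, h2]

/-- the dominating sequence -/
noncomputable def uB (a : ℂ) (b0 R : ℝ) (j : ℕ) : ℝ :=
  Pr j (‖a‖+1) / Pr j b0 * ((j+1) * R^j / j.factorial)

lemma DB_le (a : ℂ) {b0 : ℝ} (hb : 0 < b0) (j : ℕ) :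
    Pr j (‖a‖+1) / Pr j b0 ≤ ((b0 + ‖a‖ + 1)/b0)^j := by
  have hc : (0:ℝ) < ‖a‖ + 1 := by positivity
  induction j with
  | zero => simp [Pr_zero]
  | succ j ih =>
    rw [Pr_succ, Pr_succ, pow_succ, ← div_mul_div_comm]
    have h1 : (‖a‖+1+j)/(b0+j) ≤ (b0 + ‖a‖ + 1)/b0 := by
      rw [div_le_div_iff₀ (by positivity) hb]
      have : (0:ℝ) ≤ (j:ℝ) := Nat.cast_nonneg j
      nlinarith [norm_nonneg a]
    have h2 : (0:ℝ) ≤ (‖a‖+1+j)/(b0+j) := by positivity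
    have h3 : (0:ℝ) ≤ Pr j (‖a‖+1) / Pr j b0 := by
      have := Pr_pos hc j; have := Pr_pos hb j; positivity
    exact mul_le_mul ih h1 h2 (by positivity)

lemma uB_nonneg (a : ℂ) {b0 : ℝ} (hb : 0 < b0) {R : ℝ} (hR : 0 ≤ R) (j : ℕ) :
    0 ≤ uB a b0 R j := by
  unfold uB
  have h1 := Pr_pos (show (0:ℝ) < ‖a‖+1 by positivity) j
  have h2 := Pr_pos hb j
  positivity

lemma summable_uB (a : ℂ) {b0 : ℝ} (hb : 0 < b0) {R : ℝ} (hR : 0 ≤ R) :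
    Summable (uB a b0 R) := by
  set K : ℝ := (b0 + ‖a‖ + 1)/b0 with hK
  have hK0 : 0 < K := by positivity
  refine Summable.of_nonneg_of_le (uB_nonneg a hb hR) (fun j => ?_)
    (Real.summable_pow_div_factorial (2*K*R))
  ·
    have h2 : ((j:ℝ)+1) ≤ 2^j := by
      have := Nat.lt_two_pow_self (n := j)
      exact_mod_cast Nat.succ_le_of_lt this
    have h3 : (0:ℝ) ≤ ((j:ℝ)+1) * R^j / j.factorial := by positivity
    calc uB a b0 R j ≤ K^j * (((j:ℝ)+1) * R^j / j.factorial) :=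
          mul_le_mul_of_nonneg_right (DB_le a hb j) h3
      _ ≤ K^j * ((2:ℝ)^j * R^j / j.factorial) := by
          apply mul_le_mul_of_nonneg_left _ (by positivity)
          apply div_le_div_of_nonneg_right _ (by positivity)
          · exact mul_le_mul_of_nonneg_right h2 (by positivity)
      _ = (2*K*R)^j / j.factorial := by
          rw [mul_pow, mul_pow]; ring

lemma norm_cc_le (a : ℂ) {b0 : ℝ} (hb : 0 < b0) (j : ℕ) :
    ‖cc a b0 j‖ ≤ Pr j (‖a‖+1) / Pr j b0 / j.factorial := by
  have h2 := Pr_pos hb j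
  have hfac : (0:ℝ) < (j.factorial : ℝ) := by positivity
  calc ‖cc a b0 j‖ = ‖Pc j a‖ * (Pr j b0 * j.factorial)⁻¹ := by
        rw [cc, norm_mul, norm_inv, norm_mul, Complex.norm_real, Complex.norm_natCast,
          Real.norm_eq_abs, abs_of_pos h2]
    _ ≤ Pr j (‖a‖+1) * (Pr j b0 * j.factorial)⁻¹ :=
        mul_le_mul_of_nonneg_right (Pc_norm_le a j) (by positivity)
    _ = Pr j (‖a‖+1) / Pr j b0 / j.factorial := by
        rw [div_div, div_eq_mul_inv]


lemma norm_term_le (a : ℂ) {b0 : ℝ} (hb : 0 < b0) {R : ℝ} (hR : 0 ≤ R)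
    {w : ℂ} (hw : ‖w‖ ≤ R) (j : ℕ) :
    ‖cc a b0 j * w^j‖ ≤ uB a b0 R j := by
  have h1 := Pr_pos (show (0:ℝ) < ‖a‖+1 by positivity) j
  have h2 := Pr_pos hb j
  calc ‖cc a b0 j * w^j‖ = ‖cc a b0 j‖ * ‖w‖^j := by rw [norm_mul, norm_pow]
    _ ≤ (Pr j (‖a‖+1) / Pr j b0 / j.factorial) * R^j :=
        mul_le_mul (norm_cc_le a hb j) (pow_le_pow_left₀ (norm_nonneg w) hw j)
          (by positivity) (by positivity)
    _ = Pr j (‖a‖+1) / Pr j b0 * (1 * R^j / j.factorial) := by ring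
    _ ≤ uB a b0 R j := by
        rw [uB]
        refine mul_le_mul_of_nonneg_left ?_ (by positivity)
        refine div_le_div_of_nonneg_right ?_ (by positivity)
        refine mul_le_mul_of_nonneg_right ?_ (by positivity)
        linarith [Nat.cast_nonneg (α := ℝ) j]

lemma summable_term (a : ℂ) {b0 : ℝ} (hb : 0 < b0) (w : ℂ) :
    Summable (fun j => cc a b0 j * w^j) :=
  Summable.of_norm_bounded (summable_uB a hb (norm_nonneg w))
    (fun j => norm_term_le a hb (norm_nonneg w) le_rfl j)

lemma summable_term_j (a : ℂ) {b0 : ℝ} (hb : 0 < b0) (w : ℂ) :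
    Summable (fun j => cc a b0 j * ((j : ℂ) * w^j)) := by
  refine Summable.of_norm_bounded (summable_uB a hb (norm_nonneg w)) (fun j => ?_)
  have h1 := Pr_pos (show (0:ℝ) < ‖a‖+1 by positivity) j
  have h2 := Pr_pos hb j
  calc ‖cc a b0 j * ((j:ℂ) * w^j)‖ = ‖cc a b0 j‖ * ((j:ℝ) * ‖w‖^j) := by
        rw [norm_mul, norm_mul, norm_pow, Complex.norm_natCast]
    _ ≤ (Pr j (‖a‖+1) / Pr j b0 / j.factorial) * ((j:ℝ) * ‖w‖^j) :=
        mul_le_mul_of_nonneg_right (norm_cc_le a hb j) (by positivity)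
    _ = Pr j (‖a‖+1) / Pr j b0 * ((j:ℝ) * ‖w‖^j / j.factorial) := by ring
    _ ≤ uB a b0 ‖w‖ j := by
        rw [uB]
        refine mul_le_mul_of_nonneg_left ?_ (by positivity)
        refine div_le_div_of_nonneg_right ?_ (by positivity)
        refine mul_le_mul_of_nonneg_right ?_ (by positivity)
        linarith

noncomputable def dF1 (a : ℂ) (b0 : ℝ) (z : ℂ) : ℂ :=
  ∑' j : ℕ, cc a b0 j * ((j : ℂ) * z^(j-1))

lemma hasDerivAt_sum (a : ℂ) {b0 : ℝ} (hb : 0 < b0) (z : ℂ) :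
    HasDerivAt (fun w => ∑' j : ℕ, cc a b0 j * w^j) (dF1 a b0 z) z := by
  set R : ℝ := ‖z‖ + 1 with hR
  have hR1 : (1:ℝ) ≤ R := by have := norm_nonneg z; rw [hR]; linarith
  have hR0 : (0:ℝ) ≤ R := by linarith
  refine hasDerivAt_tsum_of_isPreconnected (summable_uB a hb hR0)
    (Metric.isOpen_ball) (convex_ball (0:ℂ) R).isPreconnected
    (g' := fun j w => cc a b0 j * ((j:ℕ) * w^(j-1)))
    (fun j w _ => (hasDerivAt_pow j w).const_mul (cc a b0 j))
    (fun j w hw => ?_) (Metric.mem_ball_self (by linarith))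
    (summable_term a hb 0) ?_
  · rw [Metric.mem_ball, dist_zero_right] at hw
    have h1 := Pr_pos (show (0:ℝ) < ‖a‖+1 by positivity) j
    have h2 := Pr_pos hb j
    calc ‖cc a b0 j * ((j:ℂ) * w^(j-1))‖ = ‖cc a b0 j‖ * ((j:ℝ) * ‖w‖^(j-1)) := by
          rw [norm_mul, norm_mul, norm_pow, Complex.norm_natCast]
      _ ≤ (Pr j (‖a‖+1) / Pr j b0 / j.factorial) * ((j:ℝ) * R^(j-1)) := by
          refine mul_le_mul (norm_cc_le a hb j) ?_ (by positivity) (by positivity)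
          exact mul_le_mul_of_nonneg_left
            (pow_le_pow_left₀ (norm_nonneg w) hw.le _) (Nat.cast_nonneg j)
      _ = Pr j (‖a‖+1) / Pr j b0 * ((j:ℝ) * R^(j-1) / j.factorial) := by ring
      _ ≤ uB a b0 R j := by
          rw [uB]
          refine mul_le_mul_of_nonneg_left ?_ (by positivity)
          refine div_le_div_of_nonneg_right ?_ (by positivity)
          have hpow : R^(j-1) ≤ R^j := pow_le_pow_right₀ hR1 (Nat.sub_le j 1)
          have hj : (j:ℝ) ≤ (j:ℝ) + 1 := by linarith
          exact mul_le_mul hj hpow (by positivity) (by positivity)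
  · rw [Metric.mem_ball, dist_zero_right]; linarith

lemma oneF1_eq_tsum (a : ℂ) {b0 : ℝ} (hb : 0 < b0) (z : ℂ) :
    (∑' j : ℕ, ((ascPochhammer ℂ j).eval a / (ascPochhammer ℂ j).eval ((b0:ℝ):ℂ)) * z ^ j
      / (j.factorial : ℂ)) = ∑' j : ℕ, cc a b0 j * z^j := by
  refine tsum_congr fun j => ?_
  have h2 := Pr_pos hb j
  have hne : ((Pr j b0 : ℝ) : ℂ) ≠ 0 := by simpa using h2.ne'
  have hfac : ((j.factorial : ℕ) : ℂ) ≠ 0 :=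
    (Nat.cast_ne_zero (R := ℂ)).mpr j.factorial_ne_zero
  have hb' : (ascPochhammer ℂ j).eval ((b0:ℝ):ℂ) = ((Pr j b0 : ℝ) : ℂ) := Pc_ofReal j b0
  rw [hb']
  show Pc j a / _ * z ^ j / _ = Pc j a * (((Pr j b0 : ℝ) : ℂ) * (j.factorial : ℂ))⁻¹ * z^j
  field_simp

lemma contiguous (a : ℂ) {b0 : ℝ} (hb : 0 < b0) (z : ℂ) :
    a * (∑' j : ℕ, cc a b0 j * z^j) + z * dF1 a b0 z
      = a * ∑' j : ℕ, cc (a+1) b0 j * z^j := by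
  have hfun : (fun j : ℕ => z * (cc a b0 j * ((j:ℂ) * z^(j-1))))
      = fun j : ℕ => cc a b0 j * ((j:ℂ) * z^j) := by
    funext j
    cases j with
    | zero => simp
    | succ t => push_cast; ring_nf
  rw [dF1, ← tsum_mul_left, ← tsum_mul_left, ← tsum_mul_left, hfun,
    ← Summable.tsum_add ((summable_term a hb z).mul_left a) (summable_term_j a hb z)]
  refine tsum_congr fun j => ?_
  have key := Pc_shift j a
  show a * (cc a b0 j * z ^ j) + cc a b0 j * ((j:ℂ) * z^j) = a * (cc (a+1) b0 j * z ^ j)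
  rw [cc, cc]
  linear_combination ((((Pr j b0 : ℝ) : ℂ) * (j.factorial : ℂ))⁻¹ * z^j) * key


/-- decompose a continuous linear map along coordinates -/
lemma sum_coord_apply {n : ℕ} (D : E n →L[ℝ] ℂ) (y : E n) :
    ∑ j : Fin n, ((y j : ℝ) : ℂ) * D (EuclideanSpace.single j 1) = D y := by
  have hy : ∑ j : Fin n, (y j) • EuclideanSpace.single j (1:ℝ) = y := by
    have := (EuclideanSpace.basisFun (Fin n) ℝ).sum_repr y
    simpa using this
  calc ∑ j : Fin n, ((y j : ℝ) : ℂ) * D (EuclideanSpace.single j 1)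
      = ∑ j : Fin n, D ((y j) • EuclideanSpace.single j 1) := by
        refine Finset.sum_congr rfl fun j _ => ?_
        rw [map_smul, Complex.real_smul]
    _ = D (∑ j : Fin n, (y j) • EuclideanSpace.single j 1) := (map_sum D _ _).symm
    _ = D y := by rw [hy]

lemma diff_poly {n : ℕ} (p : MvPolynomial (Fin n) ℂ) :
    Differentiable ℝ (fun y : E n => MvPolynomial.eval (fun j => ((y j : ℝ) : ℂ)) p) := by
  induction p using MvPolynomial.induction_on with
  | C a => simpa using differentiable_const (a : ℂ)
  | add p q hp hq => simp only [map_add]; exact hp.add hq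
  | mul_X p i hp =>
    simp only [map_mul, MvPolynomial.eval_X]
    have hcoord : Differentiable ℝ (fun y : E n => ((y i : ℝ) : ℂ)) :=
      Complex.ofRealCLM.differentiable.comp (by fun_prop)
    exact hp.mul hcoord

end Aux12

set_option maxHeartbeats 1600000 in
/-- `η⁺.F_{m,l,k} = -((m+4l+2k+n)/4) F_{m+4,l,k}`, where
`(η⁺F)(θ,y) = ½ e^{-2iθ}(-∑ⱼ yⱼ ∂F/∂yⱼ - i ∂F/∂θ - (n/2 + 2is‖y‖²) F)`. -/
theorem stmt12 (n k l : ℕ) (hn : 1 ≤ n) (m : ℤ) (s : ℂ)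
    (h : E n → ℂ) (hh : IsHarmonicHomog k h) (θ : ℝ) (y : E n) :
    (1 / 2 : ℂ) * Complex.exp (-2 * Complex.I * (θ : ℂ)) *
        (-(∑ j : Fin n, ((y j : ℝ) : ℂ) * pd j (fun y' : E n => Fm n s m l k h θ y') y)
          - Complex.I * deriv (fun θ' : ℝ => Fm n s m l k h θ' y) θ
          - ((n : ℂ) / 2 + 2 * Complex.I * s * ((‖y‖ : ℝ) : ℂ) ^ 2) * Fm n s m l k h θ y)
      = -(((m : ℂ) + 4 * (l : ℂ) + 2 * (k : ℂ) + (n : ℂ)) / 4) * Fm n s (m + 4) l k h θ y := by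
  obtain ⟨hpoly, hhomog, -⟩ := hh
  have hdiff : Differentiable ℝ h := by
    obtain ⟨p, hp⟩ := hpoly
    rw [show h = fun y : E n => MvPolynomial.eval (fun j => ((y j : ℝ) : ℂ)) p from funext hp]
    exact Aux12.diff_poly p
  have hb0 : (0:ℝ) < (2 * (l : ℝ) + (k : ℝ) + (n : ℝ) / 2) := by
    have h1 : (1:ℝ) ≤ (n:ℝ) := by exact_mod_cast hn
    have h2 : (0:ℝ) ≤ (l:ℝ) := Nat.cast_nonneg l
    have h3 : (0:ℝ) ≤ (k:ℝ) := Nat.cast_nonneg k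
    linarith
  -- Euler identity
  have heuler : fderiv ℝ h y y = (k : ℂ) * h y := by
    have h0' : HasDerivAt (fun t : ℝ => t • y) y 1 := by
      simpa only [one_smul, id_eq] using (hasDerivAt_id (1:ℝ)).smul_const y
    have hfd : HasFDerivAt h (fderiv ℝ h y) ((1:ℝ) • y) :=
      (one_smul ℝ y).symm ▸ (hdiff y).hasFDerivAt
    have H1 : HasDerivAt (fun t : ℝ => h (t • y)) (fderiv ℝ h y y) 1 :=
      hfd.comp_hasDerivAt 1 h0'
    have H2 : HasDerivAt (fun t : ℝ => h (t • y)) ((k : ℂ) * h y) 1 := by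
      have hfun : (fun t : ℝ => h (t • y)) = fun t : ℝ => ((t : ℝ) : ℂ) ^ k * h y :=
        funext fun t => hhomog t y
      rw [hfun]
      have hp : HasDerivAt (fun t : ℝ => ((t : ℝ) : ℂ) ^ k) ((k : ℂ)) 1 := by
        simpa only [Complex.ofReal_one, one_pow, mul_one] using
          (hasDerivAt_pow k ((1:ℝ) : ℂ)).comp_ofReal
      exact hp.mul_const (h y)
    exact H1.unique H2
  -- contiguous relation
  have e1 : oneF1 (((m : ℂ) + 4 * (l : ℂ) + 2 * (k : ℂ) + (n : ℂ)) / 4) (((2 * (l : ℝ) + (k : ℝ) + (n : ℝ) / 2) : ℝ) : ℂ) (2 * Complex.I * s * ((‖y‖ ^ 2 : ℝ) : ℂ)) = ∑' j : ℕ, Aux12.cc (((m : ℂ) + 4 * (l : ℂ) + 2 * (k : ℂ) + (n : ℂ)) / 4) (2 * (l : ℝ) + (k : ℝ) + (n : ℝ) / 2) j * (2 * Complex.I * s * ((‖y‖ ^ 2 : ℝ) : ℂ)) ^ j :=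
    Aux12.oneF1_eq_tsum (((m : ℂ) + 4 * (l : ℂ) + 2 * (k : ℂ) + (n : ℂ)) / 4) hb0 (2 * Complex.I * s * ((‖y‖ ^ 2 : ℝ) : ℂ))
  have e2 : oneF1 ((((m : ℂ) + 4 * (l : ℂ) + 2 * (k : ℂ) + (n : ℂ)) / 4) + 1) (((2 * (l : ℝ) + (k : ℝ) + (n : ℝ) / 2) : ℝ) : ℂ) (2 * Complex.I * s * ((‖y‖ ^ 2 : ℝ) : ℂ)) = ∑' j : ℕ, Aux12.cc ((((m : ℂ) + 4 * (l : ℂ) + 2 * (k : ℂ) + (n : ℂ)) / 4) + 1) (2 * (l : ℝ) + (k : ℝ) + (n : ℝ) / 2) j * (2 * Complex.I * s * ((‖y‖ ^ 2 : ℝ) : ℂ)) ^ j :=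
    Aux12.oneF1_eq_tsum ((((m : ℂ) + 4 * (l : ℂ) + 2 * (k : ℂ) + (n : ℂ)) / 4) + 1) hb0 (2 * Complex.I * s * ((‖y‖ ^ 2 : ℝ) : ℂ))
  have hcontig : (((m : ℂ) + 4 * (l : ℂ) + 2 * (k : ℂ) + (n : ℂ)) / 4) * (oneF1 (((m : ℂ) + 4 * (l : ℂ) + 2 * (k : ℂ) + (n : ℂ)) / 4) (((2 * (l : ℝ) + (k : ℝ) + (n : ℝ) / 2) : ℝ) : ℂ) (2 * Complex.I * s * ((‖y‖ ^ 2 : ℝ) : ℂ))) + (2 * Complex.I * s * ((‖y‖ ^ 2 : ℝ) : ℂ)) * (Aux12.dF1 (((m : ℂ) + 4 * (l : ℂ) + 2 * (k : ℂ) + (n : ℂ)) / 4) (2 * (l : ℝ) + (k : ℝ) + (n : ℝ) / 2) (2 * Complex.I * s * ((‖y‖ ^ 2 : ℝ) : ℂ))) = (((m : ℂ) + 4 * (l : ℂ) + 2 * (k : ℂ) + (n : ℂ)) / 4) * (oneF1 ((((m : ℂ) + 4 * (l : ℂ) + 2 * (k : ℂ) + (n : ℂ)) / 4) + 1) (((2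 * (l : ℝ) + (k : ℝ) + (n : ℝ) / 2) : ℝ) : ℂ) (2 * Complex.I * s * ((‖y‖ ^ 2 : ℝ) : ℂ))) := by
    rw [e1, e2]
    exact Aux12.contiguous (((m : ℂ) + 4 * (l : ℂ) + 2 * (k : ℂ) + (n : ℂ)) / 4) hb0 (2 * Complex.I * s * ((‖y‖ ^ 2 : ℝ) : ℂ))
  have hpow : ((‖y‖ ^ 2 : ℝ) : ℂ) * ((l : ℂ) * ((‖y‖ ^ 2 : ℝ) : ℂ) ^ (l - 1)) = (l : ℂ) * ((‖y‖ ^ 2 : ℝ) : ℂ) ^ l := by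
    cases l with
    | zero => simp
    | succ t =>
      rw [show t + 1 - 1 = t from rfl, pow_succ]
      push_cast
      ring
  -- theta derivative
  have h1θ : HasDerivAt (fun w : ℂ => Complex.exp (-Complex.I * (m : ℂ) * w / 2))
      ((Complex.exp (-Complex.I * (m : ℂ) * (θ : ℂ) / 2)) * (-Complex.I * (m : ℂ) / 2)) ((θ : ℝ) : ℂ) := by
    have heq : (fun w : ℂ => Complex.exp (-Complex.I * (m : ℂ) * w / 2))
        = fun w : ℂ => Complex.exp ((-Complex.I * (m : ℂ) / 2) * w) := by
      funext w; congr 1; ring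
    rw [heq, show -Complex.I * (m : ℂ) * ((θ:ℝ):ℂ) / 2
      = (-Complex.I * (m : ℂ) / 2) * ((θ:ℝ):ℂ) from by ring]
    simpa only [mul_one, id_eq] using
      ((hasDerivAt_id ((θ:ℝ) : ℂ)).const_mul (-Complex.I * (m : ℂ) / 2)).cexp
  have hθF : HasDerivAt (fun θ' : ℝ => Fm n s m l k h θ' y)
      ((Complex.exp (-Complex.I * (m : ℂ) * (θ : ℂ) / 2)) * (-Complex.I * (m : ℂ) / 2) * ((Complex.exp (-Complex.I * s * ((‖y‖ ^ 2 : ℝ) : ℂ))) * ((‖y‖ ^ 2 : ℝ) : ℂ) ^ l * h y * (oneF1 (((m : ℂ) + 4 * (l : ℂ) + 2 * (k : ℂ) + (n : ℂ)) / 4) (((2 * (l : ℝ) + (k : ℝ) + (n : ℝ) / 2) : ℝ) : ℂ) (2 * Complex.I * s * ((‖y‖ ^ 2 : ℝ) : ℂ))))) θ := by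
    refine ((h1θ.comp_ofReal).mul_const ((Complex.exp (-Complex.I * s * ((‖y‖ ^ 2 : ℝ) : ℂ))) * ((‖y‖ ^ 2 : ℝ) : ℂ) ^ l * h y * (oneF1 (((m : ℂ) + 4 * (l : ℂ) + 2 * (k : ℂ) + (n : ℂ)) / 4) (((2 * (l : ℝ) + (k : ℝ) + (n : ℝ) / 2) : ℝ) : ℂ) (2 * Complex.I * s * ((‖y‖ ^ 2 : ℝ) : ℂ))))).congr_of_eventuallyEq
      (Filter.Eventually.of_forall fun θ' => ?_)
    show Fm n s m l k h θ' y = _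
    simp only [Fm, Int.cast_natCast]
    rw [show ((‖y‖ : ℝ) : ℂ) ^ (2 * l) = ((‖y‖ ^ 2 : ℝ) : ℂ) ^ l from by rw [pow_mul, Complex.ofReal_pow],
      show ((‖y‖ : ℝ) : ℂ) ^ 2 = ((‖y‖ ^ 2 : ℝ) : ℂ) from (Complex.ofReal_pow ‖y‖ 2).symm,
      show (2 * (l : ℂ) + (k : ℂ) + (n : ℂ) / 2) = (((2 * (l : ℝ) + (k : ℝ) + (n : ℝ) / 2) : ℝ) : ℂ) from by push_cast; ring]
    ring
  have hθd : deriv (fun θ' : ℝ => Fm n s m l k h θ' y) θ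
      = (Complex.exp (-Complex.I * (m : ℂ) * (θ : ℂ) / 2)) * (-Complex.I * (m : ℂ) / 2) * ((Complex.exp (-Complex.I * s * ((‖y‖ ^ 2 : ℝ) : ℂ))) * ((‖y‖ ^ 2 : ℝ) : ℂ) ^ l * h y * (oneF1 (((m : ℂ) + 4 * (l : ℂ) + 2 * (k : ℂ) + (n : ℂ)) / 4) (((2 * (l : ℝ) + (k : ℝ) + (n : ℝ) / 2) : ℝ) : ℂ) (2 * Complex.I * s * ((‖y‖ ^ 2 : ℝ) : ℂ)))) := hθF.deriv
  -- value identities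
  have hT : Fm n s m l k h θ y = (Complex.exp (-Complex.I * (m : ℂ) * (θ : ℂ) / 2)) * ((Complex.exp (-Complex.I * s * ((‖y‖ ^ 2 : ℝ) : ℂ))) * ((‖y‖ ^ 2 : ℝ) : ℂ) ^ l * h y * (oneF1 (((m : ℂ) + 4 * (l : ℂ) + 2 * (k : ℂ) + (n : ℂ)) / 4) (((2 * (l : ℝ) + (k : ℝ) + (n : ℝ) / 2) : ℝ) : ℂ) (2 * Complex.I * s * ((‖y‖ ^ 2 : ℝ) : ℂ)))) := by
    simp only [Fm, Int.cast_natCast]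
    rw [show ((‖y‖ : ℝ) : ℂ) ^ (2 * l) = ((‖y‖ ^ 2 : ℝ) : ℂ) ^ l from by rw [pow_mul, Complex.ofReal_pow],
      show ((‖y‖ : ℝ) : ℂ) ^ 2 = ((‖y‖ ^ 2 : ℝ) : ℂ) from (Complex.ofReal_pow ‖y‖ 2).symm,
      show (2 * (l : ℂ) + (k : ℂ) + (n : ℂ) / 2) = (((2 * (l : ℝ) + (k : ℝ) + (n : ℝ) / 2) : ℝ) : ℂ) from by push_cast; ring]
    ring
  have hT4 : Fm n s (m + 4) l k h θ y
      = (Complex.exp (-2 * Complex.I * (θ : ℂ))) * (Complex.exp (-Complex.I * (m : ℂ) * (θ : ℂ) / 2)) * ((Complex.exp (-Complex.I * s * ((‖y‖ ^ 2 : ℝ) : ℂ))) * ((‖y‖ ^ 2 : ℝ) : ℂ) ^ l * h y * (oneF1 ((((m : ℂ) + 4 * (l : ℂ) + 2 * (k : ℂ) + (n : ℂ)) / 4) + 1) (((2 * (l : ℝ) + (k : ℝ) + (n : ℝ) / 2) : ℝ) : ℂ) (2 * Complex.I * s * ((‖y‖ ^ 2 : ℝ) : ℂ)))) := by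
    simp only [Fm, Int.cast_natCast]
    push_cast
    rw [show -Complex.I * ((m : ℂ) + 4) * (θ : ℂ) / 2
        = (-2 * Complex.I * (θ : ℂ)) + (-Complex.I * (m : ℂ) * (θ : ℂ) / 2) from by ring,
      Complex.exp_add,
      show ((‖y‖ : ℝ) : ℂ) ^ (2 * l) = ((‖y‖ ^ 2 : ℝ) : ℂ) ^ l from by rw [pow_mul, Complex.ofReal_pow],
      show ((‖y‖ : ℝ) : ℂ) ^ 2 = ((‖y‖ ^ 2 : ℝ) : ℂ) from (Complex.ofReal_pow ‖y‖ 2).symm,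
      show (2 * (l : ℂ) + (k : ℂ) + (n : ℂ) / 2) = (((2 * (l : ℝ) + (k : ℝ) + (n : ℝ) / 2) : ℝ) : ℂ) from by push_cast; ring,
      show ((m : ℂ) + 4 + 4 * (l : ℂ) + 2 * (k : ℂ) + (n : ℂ)) / 4 = (((m : ℂ) + 4 * (l : ℂ) + 2 * (k : ℂ) + (n : ℂ)) / 4) + 1 from by ring]
    ring
  -- spatial derivative
  have hq : HasFDerivAt (fun y' : E n => ((‖y'‖ ^ 2 : ℝ) : ℂ)) (Complex.ofRealCLM.comp (2 • (innerSL ℝ y))) y :=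
    Complex.ofRealCLM.hasFDerivAt.comp y (hasStrictFDerivAt_norm_sq y).hasFDerivAt
  have h1 : HasDerivAt (fun w : ℂ => Complex.exp (-Complex.I * s * w))
      ((Complex.exp (-Complex.I * s * ((‖y‖ ^ 2 : ℝ) : ℂ))) * (-Complex.I * s)) ((‖y‖ ^ 2 : ℝ) : ℂ) := by
    have hlin : HasDerivAt (fun w : ℂ => -Complex.I * s * w) (-Complex.I * s)
        ((‖y‖ ^ 2 : ℝ) : ℂ) := by
      simpa only [mul_one, id_eq] using
        (hasDerivAt_id ((‖y‖ ^ 2 : ℝ) : ℂ)).const_mul (-Complex.I * s)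
    exact hlin.cexp
  have h2 : HasDerivAt (fun w : ℂ => w ^ l) ((l : ℂ) * ((‖y‖ ^ 2 : ℝ) : ℂ) ^ (l - 1)) ((‖y‖ ^ 2 : ℝ) : ℂ) :=
    hasDerivAt_pow l ((‖y‖ ^ 2 : ℝ) : ℂ)
  have h3 : HasDerivAt (fun w : ℂ => oneF1 (((m : ℂ) + 4 * (l : ℂ) + 2 * (k : ℂ) + (n : ℂ)) / 4) (((2 * (l : ℝ) + (k : ℝ) + (n : ℝ) / 2) : ℝ) : ℂ) (2 * Complex.I * s * w))
      ((Aux12.dF1 (((m : ℂ) + 4 * (l : ℂ) + 2 * (k : ℂ) + (n : ℂ)) / 4) (2 * (l : ℝ) + (k : ℝ) + (n : ℝ) / 2) (2 * Complex.I * s * ((‖y‖ ^ 2 : ℝ) : ℂ))) * (2 * Complex.I * s)) ((‖y‖ ^ 2 : ℝ) : ℂ) := by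
    have hin : HasDerivAt (fun w : ℂ => 2 * Complex.I * s * w) (2 * Complex.I * s) ((‖y‖ ^ 2 : ℝ) : ℂ) := by
      simpa only [mul_one, id_eq] using
        (hasDerivAt_id ((‖y‖ ^ 2 : ℝ) : ℂ)).const_mul (2 * Complex.I * s)
    have hout : HasDerivAt (fun w : ℂ => oneF1 (((m : ℂ) + 4 * (l : ℂ) + 2 * (k : ℂ) + (n : ℂ)) / 4) (((2 * (l : ℝ) + (k : ℝ) + (n : ℝ) / 2) : ℝ) : ℂ) w) (Aux12.dF1 (((m : ℂ) + 4 * (l : ℂ) + 2 * (k : ℂ) + (n : ℂ)) / 4) (2 * (l : ℝ) + (k : ℝ) + (n : ℝ) / 2) (2 * Complex.I * s * ((‖y‖ ^ 2 : ℝ) : ℂ))) (2 * Complex.I * s * ((‖y‖ ^ 2 : ℝ) : ℂ)) := by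
      have hfun : (fun w : ℂ => oneF1 (((m : ℂ) + 4 * (l : ℂ) + 2 * (k : ℂ) + (n : ℂ)) / 4) (((2 * (l : ℝ) + (k : ℝ) + (n : ℝ) / 2) : ℝ) : ℂ) w)
          = fun w : ℂ => ∑' j : ℕ, Aux12.cc (((m : ℂ) + 4 * (l : ℂ) + 2 * (k : ℂ) + (n : ℂ)) / 4) (2 * (l : ℝ) + (k : ℝ) + (n : ℝ) / 2) j * w ^ j :=
        funext fun w => Aux12.oneF1_eq_tsum (((m : ℂ) + 4 * (l : ℂ) + 2 * (k : ℂ) + (n : ℂ)) / 4) hb0 w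
      rw [hfun]
      exact Aux12.hasDerivAt_sum (((m : ℂ) + 4 * (l : ℂ) + 2 * (k : ℂ) + (n : ℂ)) / 4) hb0 (2 * Complex.I * s * ((‖y‖ ^ 2 : ℝ) : ℂ))
    exact hout.comp ((‖y‖ ^ 2 : ℝ) : ℂ) hin
  have hpsi : HasDerivAt (fun w : ℂ => Complex.exp (-Complex.I * s * w) * w ^ l * oneF1 (((m : ℂ) + 4 * (l : ℂ) + 2 * (k : ℂ) + (n : ℂ)) / 4) (((2 * (l : ℝ) + (k : ℝ) + (n : ℝ) / 2) : ℝ) : ℂ) (2 * Complex.I * s * w)) (((Complex.exp (-Complex.I * s * ((‖y‖ ^ 2 : ℝ) : ℂ))) * (-Complex.I * s) * ((‖y‖ ^ 2 : ℝ) : ℂ) ^ l + (Complex.exp (-Complex.I * s * ((‖y‖ ^ 2 : ℝ) : ℂ))) * ((l : ℂ) * ((‖y‖ ^ 2 : ℝ) : ℂ) ^ (l - 1))) * (oneF1 (((m : ℂ) + 4 * (l : ℂ) + 2 * (k : ℂ) + (n : ℂ)) / 4) (((2 * (l : ℝ) + (k : ℝ) + (n : ℝ) / 2) : ℝ) : ℂ)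 (2 * Complex.I * s * ((‖y‖ ^ 2 : ℝ) : ℂ))) + (Complex.exp (-Complex.I * s * ((‖y‖ ^ 2 : ℝ) : ℂ))) * ((‖y‖ ^ 2 : ℝ) : ℂ) ^ l * ((Aux12.dF1 (((m : ℂ) + 4 * (l : ℂ) + 2 * (k : ℂ) + (n : ℂ)) / 4) (2 * (l : ℝ) + (k : ℝ) + (n : ℝ) / 2) (2 * Complex.I * s * ((‖y‖ ^ 2 : ℝ) : ℂ))) * (2 * Complex.I * s))) ((‖y‖ ^ 2 : ℝ) : ℂ) := (h1.mul h2).mul h3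
  have hpsiq := hpsi.comp_hasFDerivAt y hq
  have hFmE := (hpsiq.mul (hdiff y).hasFDerivAt).const_mul (Complex.exp (-Complex.I * (m : ℂ) * (θ : ℂ) / 2))
  have hFmY : HasFDerivAt (fun y' : E n => Fm n s m l k h θ y')
      ((Complex.exp (-Complex.I * (m : ℂ) * (θ : ℂ) / 2)) • ((((fun w : ℂ => Complex.exp (-Complex.I * s * w) * w ^ l * oneF1 (((m : ℂ) + 4 * (l : ℂ) + 2 * (k : ℂ) + (n : ℂ)) / 4) (((2 * (l : ℝ) + (k : ℝ) + (n : ℝ) / 2) : ℝ) : ℂ) (2 * Complex.I * s * w)) ∘ (fun y' : E n => ((‖y'‖ ^ 2 : ℝ) : ℂ))) y) • fderiv ℝ h y + h y • ((((Complex.exp (-Complex.I * s * ((‖y‖ ^ 2 : ℝ) : ℂ))) * (-Complex.I * s) * ((‖y‖ ^ 2 : ℝ) : ℂ) ^ l + (Complex.exp (-Complex.I * s * ((‖y‖ ^ 2 : ℝ) : ℂ))) * ((l : ℂ) * ((‖y‖ ^ 2 : ℝ) : ℂ) ^ (l - 1))) * (oneF1 (((m : ℂ) + 4 * (l : ℂ)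 + 2 * (k : ℂ) + (n : ℂ)) / 4) (((2 * (l : ℝ) + (k : ℝ) + (n : ℝ) / 2) : ℝ) : ℂ) (2 * Complex.I * s * ((‖y‖ ^ 2 : ℝ) : ℂ))) + (Complex.exp (-Complex.I * s * ((‖y‖ ^ 2 : ℝ) : ℂ))) * ((‖y‖ ^ 2 : ℝ) : ℂ) ^ l * ((Aux12.dF1 (((m : ℂ) + 4 * (l : ℂ) + 2 * (k : ℂ) + (n : ℂ)) / 4) (2 * (l : ℝ) + (k : ℝ) + (n : ℝ) / 2) (2 * Complex.I * s * ((‖y‖ ^ 2 : ℝ) : ℂ))) * (2 * Complex.I * s))) • (Complex.ofRealCLM.comp (2 • (innerSL ℝ y)))))) y := by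
    refine hFmE.congr_of_eventuallyEq (Filter.Eventually.of_forall fun y' => ?_)
    show Fm n s m l k h θ y' = _
    simp only [Fm, Int.cast_natCast, Pi.mul_apply, Function.comp_apply]
    rw [show ((‖y'‖ : ℝ) : ℂ) ^ (2 * l) = ((‖y'‖ ^ 2 : ℝ) : ℂ) ^ l from by
        rw [pow_mul, Complex.ofReal_pow],
      show ((‖y'‖ : ℝ) : ℂ) ^ 2 = ((‖y'‖ ^ 2 : ℝ) : ℂ) from (Complex.ofReal_pow ‖y'‖ 2).symm,
      show (2 * (l : ℂ) + (k : ℂ) + (n : ℂ) / 2) = (((2 * (l : ℝ) + (k : ℝ) + (n : ℝ) / 2) : ℝ) : ℂ) from by push_cast; ring]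
    ring
  have hsum0 : ∑ j : Fin n, ((y j : ℝ) : ℂ) * pd j (fun y' : E n => Fm n s m l k h θ y') y
      = (fderiv ℝ (fun y' : E n => Fm n s m l k h θ y') y) y := by
    simp only [pd]
    exact Aux12.sum_coord_apply _ y
  have hDy : (fderiv ℝ (fun y' : E n => Fm n s m l k h θ y') y) y
      = (Complex.exp (-Complex.I * (m : ℂ) * (θ : ℂ) / 2)) * (((Complex.exp (-Complex.I * s * ((‖y‖ ^ 2 : ℝ) : ℂ))) * ((‖y‖ ^ 2 : ℝ) : ℂ) ^ l * (oneF1 (((m : ℂ) + 4 * (l : ℂ) + 2 * (k : ℂ) + (n : ℂ)) / 4) (((2 * (l : ℝ) + (k : ℝ) + (n : ℝ) / 2) : ℝ) : ℂ) (2 * Complex.I * s * ((‖y‖ ^ 2 : ℝ) : ℂ)))) * ((k : ℂ) * h y)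
          + h y * ((((Complex.exp (-Complex.I * s * ((‖y‖ ^ 2 : ℝ) : ℂ))) * (-Complex.I * s) * ((‖y‖ ^ 2 : ℝ) : ℂ) ^ l + (Complex.exp (-Complex.I * s * ((‖y‖ ^ 2 : ℝ) : ℂ))) * ((l : ℂ) * ((‖y‖ ^ 2 : ℝ) : ℂ) ^ (l - 1))) * (oneF1 (((m : ℂ) + 4 * (l : ℂ) + 2 * (k : ℂ) + (n : ℂ)) / 4) (((2 * (l : ℝ) + (k : ℝ) + (n : ℝ) / 2) : ℝ) : ℂ) (2 * Complex.I * s * ((‖y‖ ^ 2 : ℝ) : ℂ))) + (Complex.exp (-Complex.I * s * ((‖y‖ ^ 2 : ℝ) : ℂ))) * ((‖y‖ ^ 2 : ℝ) : ℂ) ^ l * ((Aux12.dF1 (((m : ℂ) + 4 * (l : ℂ) + 2 * (k : ℂ) + (n : ℂ)) / 4) (2 * (l : ℝ) + (k : ℝ) + (n : ℝ) / 2) (2 * Complex.I * s * ((‖y‖ ^ 2 : ℝ) : ℂ))) * (2 * Complex.I * s))) * (2 * ((‖y‖ ^ 2 : ℝ) : ℂ)))) := by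
    rw [hFmY.fderiv]
    simp only [ContinuousLinearMap.add_apply, ContinuousLinearMap.smul_apply,
      ContinuousLinearMap.coe_comp', Function.comp_apply, Complex.ofRealCLM_apply,
      innerSL_apply_apply, smul_eq_mul, nsmul_eq_mul, real_inner_self_eq_norm_sq, heuler]
    push_cast
    ring
  rw [show ((‖y‖ : ℝ) : ℂ) ^ 2 = ((‖y‖ ^ 2 : ℝ) : ℂ) from (Complex.ofReal_pow ‖y‖ 2).symm,
    hsum0, hDy, hθd, hT, hT4]
  linear_combination (-((Complex.exp (-2 * Complex.I * (θ : ℂ))) * (Complex.exp (-Complex.I * (m : ℂ) * (θ : ℂ) / 2)) * (h y) * (Complex.exp (-Complex.I * s * ((‖y‖ ^ 2 : ℝ) : ℂ))) * (oneF1 (((m : ℂ) + 4 * (l : ℂ) + 2 * (k : ℂ) + (n : ℂ)) / 4) (((2 * (l : ℝ) + (k : ℝ) + (n : ℝ) / 2) : ℝ) : ℂ) (2 * Complex.I * s * ((‖y‖ ^ 2 : ℝ) : ℂ))))) * hpow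
    + ((Complex.exp (-2 * Complex.I * (θ : ℂ))) * (Complex.exp (-Complex.I * (m : ℂ) * (θ : ℂ) / 2)) * (Complex.exp (-Complex.I * s * ((‖y‖ ^ 2 : ℝ) : ℂ))) * ((‖y‖ ^ 2 : ℝ) : ℂ) ^ l * (h y) * (oneF1 (((m : ℂ) + 4 * (l : ℂ) + 2 * (k : ℂ) + (n : ℂ)) / 4) (((2 * (l : ℝ) + (k : ℝ) + (n : ℝ) / 2) : ℝ) : ℂ) (2 * Complex.I * s * ((‖y‖ ^ 2 : ℝ) : ℂ))) * (m : ℂ) / 4) * Complex.I_sq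
    + (-((Complex.exp (-2 * Complex.I * (θ : ℂ))) * (Complex.exp (-Complex.I * (m : ℂ) * (θ : ℂ) / 2)) * (Complex.exp (-Complex.I * s * ((‖y‖ ^ 2 : ℝ) : ℂ))) * ((‖y‖ ^ 2 : ℝ) : ℂ) ^ l * (h y))) * hcontig

end
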